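/- Let λ, l ∈ ℝ, ε > 0, and f : (0,ε) → (0,∞) a continuous function with ∫₀^ε f(x) dx = +∞. Suppose (a₁, b₁) and (a₂, b₂) are two differentiable solutions on (0,ε) of the system u'(x) = -λ·u(x) + l·f(x)·v(x), v'(x) = -l·f(x)·u(x) + λ·v(x), whose Wronskian a₁·b₂ - a₂·b₁ is nonzero at some (equivalently, every) point of (0,ε). Then the two solutions cannot both be square-integrable with respect to f(x)dx: it is not the case that both ∫₀^ε (a₁² + b₁²) f dx < ∞ and ∫₀^ε (a₂² + b₂²) f dx < ∞. -/

import Mathlib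

open MeasureTheory Set Filter

/-- Two solutions of the system `u' = -λu + l f v`, `v' = -l f u + λ v` on `(0,ε)`
with nonvanishing Wronskian cannot both be square-integrable with respect to `f dx`,
when `f : (0,ε) → (0,∞)` is continuous with `∫₀^ε f = ∞`. -/
theorem fundamental_solutions_not_both_L2
    (lam l ε : ℝ) (hε : 0 < ε)
    (f : ℝ → ℝ) (hf_cont : ContinuousOn f (Set.Ioo 0 ε))
    (hf_pos : ∀ x ∈ Set.Ioo 0 ε, 0 < f x)
    (hf_div : ∫⁻ x in Set.Ioo 0 ε, ENNReal.ofReal (f x) = ⊤)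
    (a₁ b₁ a₂ b₂ : ℝ → ℝ)
    (ha₁ : ∀ x ∈ Set.Ioo 0 ε, HasDerivAt a₁ (-lam * a₁ x + l * f x * b₁ x) x)
    (hb₁ : ∀ x ∈ Set.Ioo 0 ε, HasDerivAt b₁ (-(l * f x) * a₁ x + lam * b₁ x) x)
    (ha₂ : ∀ x ∈ Set.Ioo 0 ε, HasDerivAt a₂ (-lam * a₂ x + l * f x * b₂ x) x)
    (hb₂ : ∀ x ∈ Set.Ioo 0 ε, HasDerivAt b₂ (-(l * f x) * a₂ x + lam * b₂ x) x)
    (hW : ∃ x ∈ Set.Ioo 0 ε, a₁ x * b₂ x - a₂ x * b₁ x ≠ 0) :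
    ¬((∫⁻ x in Set.Ioo 0 ε, ENNReal.ofReal ((a₁ x ^ 2 + b₁ x ^ 2) * f x) < ⊤) ∧
      (∫⁻ x in Set.Ioo 0 ε, ENNReal.ofReal ((a₂ x ^ 2 + b₂ x ^ 2) * f x) < ⊤)) := by
  rintro ⟨h1, h2⟩
  obtain ⟨x₀, hx₀, hW0⟩ := hW
  set W : ℝ → ℝ := fun x => a₁ x * b₂ x - a₂ x * b₁ x with hWdef
  -- the Wronskian has zero derivative on (0, ε)
  have hWd : ∀ x ∈ Set.Ioo 0 ε, HasDerivAt W 0 x := by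
    intro x hx
    have h := (((ha₁ x hx).mul (hb₂ x hx)).sub ((ha₂ x hx).mul (hb₁ x hx)))
    have e : (-lam * a₁ x + l * f x * b₁ x) * b₂ x + a₁ x * (-(l * f x) * a₂ x + lam * b₂ x) -
      ((-lam * a₂ x + l * f x * b₂ x) * b₁ x + a₂ x * (-(l * f x) * a₁ x + lam * b₁ x)) = 0 := by
      ring
    rw [e] at h
    exact h
  -- hence it is constant on (0, ε)
  have hconst : ∀ x ∈ Set.Ioo 0 ε, W x = W x₀ := by
    intro x hx
    apply (convex_Ioo (0:ℝ) ε).is_const_of_fderivWithin_eq_zero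
      (fun y hy => ((hWd y hy).differentiableAt).differentiableWithinAt)
      ?_ hx hx₀
    intro y hy
    rw [fderivWithin_of_isOpen isOpen_Ioo hy, (hWd y hy).hasFDerivAt.fderiv]
    ext z
    simp
  set c : ℝ := W x₀ with hc
  have hcpos : 0 < |c| := abs_pos.mpr hW0
  -- continuity of everything on (0, ε)
  have hca₁ : ContinuousOn a₁ (Set.Ioo 0 ε) :=
    fun x hx => ((ha₁ x hx).differentiableAt.continuousAt).continuousWithinAt
  have hcb₁ : ContinuousOn b₁ (Set.Ioo 0 ε) :=
    fun x hx => ((hb₁ x hx).differentiableAt.continuousAt).continuousWithinAt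
  have hca₂ : ContinuousOn a₂ (Set.Ioo 0 ε) :=
    fun x hx => ((ha₂ x hx).differentiableAt.continuousAt).continuousWithinAt
  have hcb₂ : ContinuousOn b₂ (Set.Ioo 0 ε) :=
    fun x hx => ((hb₂ x hx).differentiableAt.continuousAt).continuousWithinAt
  have hg₁ : AEMeasurable (fun x => ENNReal.ofReal ((a₁ x ^ 2 + b₁ x ^ 2) * f x))
      (volume.restrict (Set.Ioo 0 ε)) := by
    exact ENNReal.measurable_ofReal.comp_aemeasurable
      ((((hca₁.pow 2).add (hcb₁.pow 2)).mul hf_cont).aemeasurable measurableSet_Ioo)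
  -- pointwise bound |c| f ≤ (a₁²+b₁²) f + (a₂²+b₂²) f
  have hpt : ∀ x ∈ Set.Ioo 0 ε,
      ENNReal.ofReal |c| * ENNReal.ofReal (f x) ≤
      ENNReal.ofReal ((a₁ x ^ 2 + b₁ x ^ 2) * f x) +
        ENNReal.ofReal ((a₂ x ^ 2 + b₂ x ^ 2) * f x) := by
    intro x hx
    have hfx := hf_pos x hx
    have hWx : |c| ≤ a₁ x ^ 2 + b₁ x ^ 2 + (a₂ x ^ 2 + b₂ x ^ 2) := by
      rw [← hconst x hx]
      simp only [hWdef]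
      rw [abs_le]
      constructor
      · nlinarith [sq_nonneg (a₁ x + b₂ x), sq_nonneg (a₂ x - b₁ x)]
      · nlinarith [sq_nonneg (a₁ x - b₂ x), sq_nonneg (a₂ x + b₁ x)]
    calc ENNReal.ofReal |c| * ENNReal.ofReal (f x)
        = ENNReal.ofReal (|c| * f x) := (ENNReal.ofReal_mul (abs_nonneg c)).symm
      _ ≤ ENNReal.ofReal ((a₁ x ^ 2 + b₁ x ^ 2) * f x + (a₂ x ^ 2 + b₂ x ^ 2) * f x) := by
          apply ENNReal.ofReal_le_ofReal
          nlinarith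
      _ = _ := ENNReal.ofReal_add (by positivity) (by positivity)
  -- integrate
  have hmono : ∫⁻ x in Set.Ioo 0 ε, ENNReal.ofReal |c| * ENNReal.ofReal (f x) ≤
      ∫⁻ x in Set.Ioo 0 ε,
        (ENNReal.ofReal ((a₁ x ^ 2 + b₁ x ^ 2) * f x) +
          ENNReal.ofReal ((a₂ x ^ 2 + b₂ x ^ 2) * f x)) := by
    refine lintegral_mono_ae ?_
    exact (ae_restrict_iff' measurableSet_Ioo).2 (ae_of_all _ hpt)
  rw [lintegral_const_mul' _ _ ENNReal.ofReal_ne_top, hf_div,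
    ENNReal.mul_top (by simpa using hcpos.ne')] at hmono
  rw [lintegral_add_left' hg₁] at hmono
  exact absurd hmono (by simp [lt_top_iff_ne_top.mp h1, lt_top_iff_ne_top.mp h2,
    ENNReal.add_ne_top, top_le_iff])
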